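/- Let ρ be a continuous extended seminorm on an extended locally convex space (Z,τ), and suppose Z = Z_fin^ρ ⊕ M algebraically for a subspace M. Then M with the subspace topology from (Z,τ) is discrete. -/

import Mathlib

open Set Filter ENNReal

variable {Z : Type*} [AddCommGroup Z] [Module ℝ Z]

def IsExtSeminorm (ρ : Z → ℝ≥0∞) : Prop :=
  (∀ (c : ℝ) (x : Z), ρ (c • x) = (‖c‖₊ : ℝ≥0∞) * ρ x) ∧
  (∀ x y : Z, ρ (x + y) ≤ ρ x + ρ y)

def elcsTop (Ps : Set (Z → ℝ≥0∞)) : TopologicalSpace Z :=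
  TopologicalSpace.mkOfNhds fun x =>
    ⨅ ρ ∈ Ps, ⨅ ε : {e : ℝ≥0∞ // 0 < e}, 𝓟 {y : Z | ρ (y - x) < ε.1}

/-- if `ρ` is a continuous extended seminorm on an elcs `(Z, τ)` and
`Z = Z_fin^ρ ⊕ M` algebraically, then `M` with the subspace topology is discrete. -/
theorem complement_discrete (Ps : Set (Z → ℝ≥0∞)) (hPs : ∀ ρ ∈ Ps, IsExtSeminorm ρ)
    (ρ : Z → ℝ≥0∞) (hρ : IsExtSeminorm ρ)
    (hcont : @Continuous Z ℝ≥0∞ (elcsTop Ps) _ ρ)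
    (S M : Submodule ℝ Z) (hS : (S : Set Z) = {x : Z | ρ x < ⊤})
    (hcompl : IsCompl S M) :
    @DiscreteTopology M (TopologicalSpace.induced (Subtype.val : M → Z) (elcsTop Ps)) := by
  letI : TopologicalSpace Z := elcsTop Ps
  set n : Z → Filter Z := fun x =>
    ⨅ ρ ∈ Ps, ⨅ ε : {e : ℝ≥0∞ // 0 < e}, 𝓟 {y : Z | ρ (y - x) < ε.1} with hn
  -- translation invariance of the neighborhood filters
  have hmap : ∀ (m x : Z), Filter.map (· + m) (n x) = n (x + m) := by
    intro m x
    have h1 : Filter.map (· + m) (n x) = Filter.comap (fun y : Z => y - m) (n x) :=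
      Filter.map_eq_comap_of_inverse (by funext y; simp) (by funext y; simp)
    rw [h1, hn]
    simp only [Filter.comap_iInf, Filter.comap_principal]
    refine iInf_congr fun ρ' => iInf_congr fun _ => iInf_congr fun ε => ?_
    congr 1
    ext y
    simp only [Set.mem_preimage, Set.mem_setOf_eq, sub_sub]
    rw [add_comm m x]
  have hρ0 : ρ 0 = 0 := by
    have := hρ.1 0 (0 : Z)
    simpa using this
  have hVopen : @IsOpen Z (elcsTop Ps) (ρ ⁻¹' Iio 1) :=
    hcont.isOpen_preimage _ isOpen_Iio
  have hVn : ∀ a ∈ ρ ⁻¹' Iio 1, (ρ ⁻¹' Iio 1) ∈ n a := hVopen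
  -- each translate U_m is open
  have hUopen : ∀ m : Z, @IsOpen Z (elcsTop Ps) ((· + m) '' (ρ ⁻¹' Iio 1)) := by
    intro m
    show ∀ x ∈ (· + m) '' (ρ ⁻¹' Iio 1), ((· + m) '' (ρ ⁻¹' Iio 1)) ∈ n x
    intro x hx
    obtain ⟨v, hv, rfl⟩ := hx
    have h1 : ((· + m) '' (ρ ⁻¹' Iio 1)) ∈ Filter.map (· + m) (n v) := by
      rw [Filter.mem_map, Set.preimage_image_eq _ (add_left_injective m)]
      exact hVn v hv
    rwa [hmap m v] at h1
  letI : TopologicalSpace M := TopologicalSpace.induced (Subtype.val : M → Z) (elcsTop Ps)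
  rw [discreteTopology_iff_isOpen_singleton]
  intro m
  refine ⟨(· + (m : Z)) '' (ρ ⁻¹' Iio 1), hUopen m, ?_⟩
  ext y
  simp only [Set.mem_preimage, Set.mem_singleton_iff]
  constructor
  · rintro ⟨v, hv, hvy⟩
    -- v = y - m has ρ v < 1 < ⊤, so v ∈ S; also v ∈ M, hence v = 0
    have hvS : v ∈ S := by
      rw [← SetLike.mem_coe, hS]
      exact lt_trans (show ρ v < 1 from hv) one_lt_top
    have hvM : v ∈ M := by
      have : (y : Z) - (m : Z) = v := by rw [← hvy]; simp
      rw [← this]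
      exact sub_mem y.2 m.2
    have hv0 : v = 0 := by
      have := hcompl.inf_eq_bot
      have : v ∈ S ⊓ M := ⟨hvS, hvM⟩
      rwa [hcompl.inf_eq_bot, Submodule.mem_bot] at this
    apply Subtype.ext
    simp [← hvy, hv0]
  · rintro rfl
    exact ⟨0, by simp [hρ0], by simp⟩
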